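/- arXiv:1308.5730 — 3 statements merged into one kernel-verified Lean document; each statement's English description precedes it below -/
import Mathlib

section
/- Consider the polymer Gibbs measure ℙ_N^{β,h} on walks S ∈ 𝕎_N with Hamiltonian ℍ_N(S) = -∑_{1≤i<j≤N} V_{ij}⟨X_i, X_j⟩ + ⟨h, S_N⟩, and the one-dimensional Ising Gibbs measures P_{Λ_N}^{β/2, h₁} and P_{Λ_N}^{β/2, h₂} on {-1,1}^N with Hamiltonian H(σ) = -∑_{i<j} V_{ij} σ_i σ_j - k∑_i σ_i (k = h₁ resp. h₂), where h₁ = ⟨h, e₁-e₂⟩ and h₂ = ⟨h, e₁+e₂⟩. Under the spin decomposition X_i ↔ (σ_i, σ̃_i), the polymer measure factorizes: ℙ_N^{β,h}(S) = P_{Λ_N}^{β/2, h₁}(σ) · P_{Λ_N}^{β/2, h₂}(σ̃). -/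
open Finset Real

noncomputable section

/-- The spin value `±1` associated to a Boolean. -/
def spin (b : Bool) : ℝ := if b then 1 else -1

/-- The set of ordered pairs `i < j` of sites in `Λ_N = {1, …, N}`. -/
def pairs (N : ℕ) : Finset (Fin N × Fin N) :=
  Finset.univ.filter (fun p => p.1 < p.2)

/-- Ising Hamiltonian on `Λ_N` with free boundary conditions, coupling matrix
`J` and external field `k`: `H(σ) = -∑_{i<j} J_{ij} σ_i σ_j - k ∑_i σ_i`. -/
def isingH (N : ℕ) (J : Fin N → Fin N → ℝ) (k : ℝ) (σ : Fin N → Bool) : ℝ :=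
  -(∑ p ∈ pairs N, J p.1 p.2 * spin (σ p.1) * spin (σ p.2)) -
    k * ∑ i, spin (σ i)

/-- Ising partition function at inverse temperature `β`. -/
def isingZ (N : ℕ) (J : Fin N → Fin N → ℝ) (β k : ℝ) : ℝ :=
  ∑ σ : Fin N → Bool, exp (-β * isingH N J k σ)

/-- Ising Gibbs probability of a configuration `σ`. -/
def isingP (N : ℕ) (J : Fin N → Fin N → ℝ) (β k : ℝ) (σ : Fin N → Bool) : ℝ :=
  exp (-β * isingH N J k σ) / isingZ N J β k

/-- Two-point function `⟨σ_i σ_j⟩` of the Ising Gibbs measure. -/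
def isingCorr (N : ℕ) (J : Fin N → Fin N → ℝ) (β k : ℝ) (i j : Fin N) : ℝ :=
  ∑ σ : Fin N → Bool, spin (σ i) * spin (σ j) * isingP N J β k σ

/-- Magnetization `⟨σ_i⟩` of the Ising Gibbs measure. -/
def isingMag (N : ℕ) (J : Fin N → Fin N → ℝ) (β k : ℝ) (i : Fin N) : ℝ :=
  ∑ σ : Fin N → Bool, spin (σ i) * isingP N J β k σ

/-- The unit step of `ℤ²` associated (via the rotated-frame spin decomposition)
to a pair of spins. Each of the four spin pairs corresponds to one of the four
unit steps `±e₁, ±e₂`. -/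
def stepOf : Bool × Bool → ℤ × ℤ
  | (true, true) => (-1, 0)
  | (true, false) => (0, 1)
  | (false, true) => (0, -1)
  | (false, false) => (1, 0)

/-- Polymer Hamiltonian on `N`-step walks with increments `X`:
`ℍ_N(S) = -∑_{1≤i<j≤N} V_{ij} ⟨X_i, X_j⟩ + ⟨h, S_N⟩`, where `S_N = ∑_i X_i`. -/
def polyH (N : ℕ) (V : Fin N → Fin N → ℝ) (h : ℝ × ℝ) (X : Fin N → ℤ × ℤ) : ℝ :=
  -(∑ p ∈ pairs N, V p.1 p.2 *
      (((X p.1).1 * (X p.2).1 + (X p.1).2 * (X p.2).2 : ℤ) : ℝ)) +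
    (h.1 * ((∑ i, (X i).1 : ℤ) : ℝ) + h.2 * ((∑ i, (X i).2 : ℤ) : ℝ))

/-- Polymer partition function `ℤ_N^β(h)`; walks in `𝕎_N` are enumerated by
their spin pairs via the bijection `X_i ↔ (σ_i, σ̃_i)`. -/
def polyZ (N : ℕ) (V : Fin N → Fin N → ℝ) (β : ℝ) (h : ℝ × ℝ) : ℝ :=
  ∑ c : Fin N → Bool × Bool, exp (-β * polyH N V h (fun i => stepOf (c i)))

/-- The polymer Gibbs probability `ℙ_N^{β,h}` of a walk (encoded by spins). -/
def polyP (N : ℕ) (V : Fin N → Fin N → ℝ) (β : ℝ) (h : ℝ × ℝ)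
    (c : Fin N → Bool × Bool) : ℝ :=
  exp (-β * polyH N V h (fun i => stepOf (c i))) / polyZ N V β h


lemma step1 (a : Bool × Bool) :
    ((stepOf a).1 : ℝ) = -(spin a.1 + spin a.2) / 2 := by
  rcases a with ⟨_ | _, _ | _⟩ <;> simp [stepOf, spin] <;> norm_num

lemma step2 (a : Bool × Bool) :
    ((stepOf a).2 : ℝ) = (spin a.1 - spin a.2) / 2 := by
  rcases a with ⟨_ | _, _ | _⟩ <;> simp [stepOf, spin] <;> norm_num

lemma key (N : ℕ) (V : Fin N → Fin N → ℝ) (β : ℝ) (h : ℝ × ℝ)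
    (c : Fin N → Bool × Bool) :
    -β * polyH N V h (fun i => stepOf (c i)) =
      -(β / 2) * isingH N V (h.1 - h.2) (fun i => (c i).1) +
      -(β / 2) * isingH N V (h.1 + h.2) (fun i => (c i).2) := by
  have hdot : ∀ p ∈ pairs N, V p.1 p.2 *
      ((((stepOf (c p.1)).1 * (stepOf (c p.2)).1 +
        (stepOf (c p.1)).2 * (stepOf (c p.2)).2 : ℤ)) : ℝ) =
      V p.1 p.2 * spin (c p.1).1 * spin (c p.2).1 / 2 +
      V p.1 p.2 * spin (c p.1).2 * spin (c p.2).2 / 2 := by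
    intro p _
    push_cast
    rw [step1, step1, step2, step2]
    ring
  have hx1 : ((∑ i, (stepOf (c i)).1 : ℤ) : ℝ) =
      -((∑ i, spin (c i).1) + ∑ i, spin (c i).2) / 2 := by
    push_cast
    rw [Finset.sum_congr rfl (fun i _ => step1 (c i))]
    rw [← Finset.sum_div, Finset.sum_neg_distrib, Finset.sum_add_distrib]
  have hx2 : ((∑ i, (stepOf (c i)).2 : ℤ) : ℝ) =
      ((∑ i, spin (c i).1) - ∑ i, spin (c i).2) / 2 := by
    push_cast
    rw [Finset.sum_congr rfl (fun i _ => step2 (c i))]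
    rw [← Finset.sum_div, Finset.sum_sub_distrib]
  unfold polyH isingH
  rw [Finset.sum_congr rfl hdot, Finset.sum_add_distrib, hx1, hx2]
  simp only [← Finset.sum_div]
  ring

lemma polyZ_factor (N : ℕ) (V : Fin N → Fin N → ℝ) (β : ℝ) (h : ℝ × ℝ) :
    polyZ N V β h =
      isingZ N V (β / 2) (h.1 - h.2) * isingZ N V (β / 2) (h.1 + h.2) := by
  unfold polyZ isingZ
  rw [Finset.sum_mul_sum]
  rw [← (Equiv.arrowProdEquivProdArrow (Fin N) (fun _ => Bool) (fun _ => Bool)).symm.sum_comp]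
  rw [Fintype.sum_prod_type]
  refine Finset.sum_congr rfl fun σ _ => Finset.sum_congr rfl fun τ _ => ?_
  rw [← Real.exp_add]
  have := key N V β h (fun i => (σ i, τ i))
  simp only [Equiv.arrowProdEquivProdArrow] at *
  simpa using this

/-- Factorization of the polymer Gibbs measure. Under the spin
decomposition `X_i ↔ (σ_i, σ̃_i)` of walks into pairs of spin configurations,
the polymer Gibbs measure with Hamiltonian
`ℍ_N(S) = -∑_{i<j} V_{ij}⟨X_i,X_j⟩ + ⟨h,S_N⟩` factorizes into the product of
two 1D Ising Gibbs measures at inverse temperature `β/2` and fields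
`h₁ = ⟨h, e₁-e₂⟩`, `h₂ = ⟨h, e₁+e₂⟩`:
`ℙ_N^{β,h}(S) = P_{Λ_N}^{β/2,h₁}(σ) · P_{Λ_N}^{β/2,h₂}(σ̃)`. -/
theorem polymer_measure_factorization (N : ℕ) (V : Fin N → Fin N → ℝ)
    (β : ℝ) (hβ : 0 < β) (h : ℝ × ℝ) (c : Fin N → Bool × Bool) :
    polyP N V β h c =
      isingP N V (β / 2) (h.1 - h.2) (fun i => (c i).1) *
      isingP N V (β / 2) (h.1 + h.2) (fun i => (c i).2) := by
  unfold polyP isingP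
  rw [key N V β h c, Real.exp_add, polyZ_factor N V β h,
    div_mul_div_comm]

end
end

section
/- With the setup of the spin decomposition, the expected squared displacement under the polymer Gibbs measure equals a sum of Ising two-point correlations: E_{ℙ_N^{β,h}}[‖S_N‖²] = (1/2) ∑_{i,j=1}^N [⟨σ_i σ_j⟩_{Λ_N}^{β/2, h₁} + ⟨σ_i σ_j⟩_{Λ_N}^{β/2, h₂}], where ⟨·⟩_{Λ_N}^{β,k} denotes expectation with respect to the 1D Ising Gibbs measure on {-1,1}^N with couplings V_{ij}, external field k, inverse temperature β, and free boundary conditions. -/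
open Finset Real

noncomputable section

lemma stepX (p : Bool × Bool) : ((stepOf p).1 : ℝ) = -(spin p.1 + spin p.2) / 2 := by
  rcases p with ⟨a, b⟩ <;> cases a <;> cases b <;> simp [stepOf, spin] <;> norm_num

lemma stepY (p : Bool × Bool) : ((stepOf p).2 : ℝ) = (spin p.1 - spin p.2) / 2 := by
  rcases p with ⟨a, b⟩ <;> cases a <;> cases b <;> simp [stepOf, spin] <;> norm_num


lemma sumStepX (N : ℕ) (c : Fin N → Bool × Bool) :
    ((∑ i, (stepOf (c i)).1 : ℤ) : ℝ) =
      -((∑ i, spin ((c i).1)) + ∑ i, spin ((c i).2)) / 2 := by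
  push_cast
  simp_rw [stepX]
  rw [← Finset.sum_add_distrib, ← Finset.sum_neg_distrib, ← Finset.sum_div]

lemma sumStepY (N : ℕ) (c : Fin N → Bool × Bool) :
    ((∑ i, (stepOf (c i)).2 : ℤ) : ℝ) =
      ((∑ i, spin ((c i).1)) - ∑ i, spin ((c i).2)) / 2 := by
  push_cast
  simp_rw [stepY]
  rw [← Finset.sum_sub_distrib, ← Finset.sum_div]

lemma exponent_eq (N : ℕ) (V : Fin N → Fin N → ℝ) (β : ℝ) (h : ℝ × ℝ)
    (c : Fin N → Bool × Bool) :
    -β * polyH N V h (fun i => stepOf (c i)) =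
      (-(β / 2) * isingH N V (h.1 - h.2) (fun i => (c i).1)) +
      (-(β / 2) * isingH N V (h.1 + h.2) (fun i => (c i).2)) := by
  have hpair : ∑ p ∈ pairs N, V p.1 p.2 *
      (((stepOf (c p.1)).1 * (stepOf (c p.2)).1 +
        (stepOf (c p.1)).2 * (stepOf (c p.2)).2 : ℤ) : ℝ) =
      ((∑ p ∈ pairs N, V p.1 p.2 * spin ((c p.1).1) * spin ((c p.2).1)) +
       (∑ p ∈ pairs N, V p.1 p.2 * spin ((c p.1).2) * spin ((c p.2).2))) / 2 := by
    rw [← Finset.sum_add_distrib, Finset.sum_div]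
    refine Finset.sum_congr rfl fun p _ => ?_
    push_cast
    rw [stepX, stepX, stepY, stepY]
    ring
  have hs1 : ((∑ i, (stepOf (c i)).1 : ℤ) : ℝ) =
      -((∑ i, spin ((c i).1)) + ∑ i, spin ((c i).2)) / 2 := by
    push_cast
    simp_rw [stepX]
    rw [← Finset.sum_add_distrib, ← Finset.sum_neg_distrib, ← Finset.sum_div]
  have hs2 : ((∑ i, (stepOf (c i)).2 : ℤ) : ℝ) =
      ((∑ i, spin ((c i).1)) - ∑ i, spin ((c i).2)) / 2 := by
    push_cast
    simp_rw [stepY]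
    rw [← Finset.sum_sub_distrib, ← Finset.sum_div]
  simp only [polyH, isingH, hpair, hs1, hs2]
  ring

lemma isingZ_pos (N : ℕ) (J : Fin N → Fin N → ℝ) (β k : ℝ) :
    0 < isingZ N J β k :=
  Finset.sum_pos (fun σ _ => exp_pos _) univ_nonempty

lemma isingP_sum (N : ℕ) (J : Fin N → Fin N → ℝ) (β k : ℝ) :
    ∑ σ : Fin N → Bool, isingP N J β k σ = 1 := by
  simp only [isingP, ← Finset.sum_div]
  exact div_self (isingZ_pos N J β k).ne'

lemma polyP_factor (N : ℕ) (V : Fin N → Fin N → ℝ) (β : ℝ) (h : ℝ × ℝ)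
    (c : Fin N → Bool × Bool) :
    polyP N V β h c =
      isingP N V (β / 2) (h.1 - h.2) (fun i => (c i).1) *
      isingP N V (β / 2) (h.1 + h.2) (fun i => (c i).2) := by
  unfold polyP isingP
  rw [polyZ_factor, exponent_eq, exp_add, div_mul_div_comm]

lemma corr_sum (N : ℕ) (J : Fin N → Fin N → ℝ) (β k : ℝ) :
    ∑ σ : Fin N → Bool, (∑ i, spin (σ i)) ^ 2 * isingP N J β k σ =
      ∑ i, ∑ j, isingCorr N J β k i j := by
  unfold isingCorr
  have key : ∀ σ : Fin N → Bool, (∑ i, spin (σ i)) ^ 2 * isingP N J β k σ =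
      ∑ i, ∑ j, spin (σ i) * spin (σ j) * isingP N J β k σ := by
    intro σ
    rw [sq, Finset.sum_mul_sum, Finset.sum_mul]
    refine Finset.sum_congr rfl fun i _ => ?_
    rw [Finset.sum_mul]
  simp_rw [key]
  rw [Finset.sum_comm]
  exact Finset.sum_congr rfl fun i _ => Finset.sum_comm

/-- The expected squared displacement under the polymer Gibbs
measure equals a sum of Ising two-point correlations:
`E_{ℙ_N^{β,h}}[‖S_N‖²] = (1/2) ∑_{i,j=1}^N [⟨σ_iσ_j⟩_{Λ_N}^{β/2,h₁} +
⟨σ_iσ_j⟩_{Λ_N}^{β/2,h₂}]`, with `h₁ = ⟨h, e₁-e₂⟩`, `h₂ = ⟨h, e₁+e₂⟩`. -/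
theorem mean_square_displacement (N : ℕ) (V : Fin N → Fin N → ℝ)
    (β : ℝ) (hβ : 0 < β) (h : ℝ × ℝ) :
    (∑ c : Fin N → Bool × Bool,
        ((((∑ i, (stepOf (c i)).1 : ℤ) : ℝ)) ^ 2 +
          (((∑ i, (stepOf (c i)).2 : ℤ) : ℝ)) ^ 2) * polyP N V β h c) =
      (1 / 2) * ∑ i, ∑ j,
        (isingCorr N V (β / 2) (h.1 - h.2) i j +
          isingCorr N V (β / 2) (h.1 + h.2) i j) := by
  have hval : ∀ c : Fin N → Bool × Bool,
      ((((∑ i, (stepOf (c i)).1 : ℤ) : ℝ)) ^ 2 +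
        (((∑ i, (stepOf (c i)).2 : ℤ) : ℝ)) ^ 2) =
      (1 / 2) * ((∑ i, spin ((c i).1)) ^ 2 + (∑ i, spin ((c i).2)) ^ 2) := by
    intro c
    rw [sumStepX, sumStepY]
    ring
  calc
    (∑ c : Fin N → Bool × Bool,
        ((((∑ i, (stepOf (c i)).1 : ℤ) : ℝ)) ^ 2 +
          (((∑ i, (stepOf (c i)).2 : ℤ) : ℝ)) ^ 2) * polyP N V β h c)
      = ∑ c : Fin N → Bool × Bool,
          (1 / 2) * ((∑ i, spin ((c i).1)) ^ 2 + (∑ i, spin ((c i).2)) ^ 2) *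
            (isingP N V (β / 2) (h.1 - h.2) (fun i => (c i).1) *
              isingP N V (β / 2) (h.1 + h.2) (fun i => (c i).2)) := by
        refine Finset.sum_congr rfl fun c _ => ?_
        rw [hval, polyP_factor]
    _ = ∑ p : (Fin N → Bool) × (Fin N → Bool),
          (1 / 2) * ((∑ i, spin (p.1 i)) ^ 2 + (∑ i, spin (p.2 i)) ^ 2) *
            (isingP N V (β / 2) (h.1 - h.2) p.1 *
              isingP N V (β / 2) (h.1 + h.2) p.2) :=
        Fintype.sum_equiv (Equiv.arrowProdEquivProdArrow (Fin N) (fun _ => Bool) (fun _ => Bool)) _ _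
          (fun c => rfl)
    _ = ∑ σ : Fin N → Bool, ∑ τ : Fin N → Bool,
          (1 / 2) * ((∑ i, spin (σ i)) ^ 2 + (∑ i, spin (τ i)) ^ 2) *
            (isingP N V (β / 2) (h.1 - h.2) σ *
              isingP N V (β / 2) (h.1 + h.2) τ) :=
        Fintype.sum_prod_type _
    _ = (1 / 2) *
          ((∑ σ : Fin N → Bool, (∑ i, spin (σ i)) ^ 2 *
              isingP N V (β / 2) (h.1 - h.2) σ) *
            (∑ τ : Fin N → Bool, isingP N V (β / 2) (h.1 + h.2) τ) +
          (∑ σ : Fin N → Bool, isingP N V (β / 2) (h.1 - h.2) σ) *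
            (∑ τ : Fin N → Bool, (∑ i, spin (τ i)) ^ 2 *
              isingP N V (β / 2) (h.1 + h.2) τ)) := by
        rw [Finset.sum_mul_sum, Finset.sum_mul_sum, ← Finset.sum_add_distrib,
          Finset.mul_sum]
        refine Finset.sum_congr rfl fun σ _ => ?_
        rw [← Finset.sum_add_distrib, Finset.mul_sum]
        exact Finset.sum_congr rfl fun τ _ => by ring
    _ = (1 / 2) * ∑ i, ∑ j,
          (isingCorr N V (β / 2) (h.1 - h.2) i j +
            isingCorr N V (β / 2) (h.1 + h.2) i j) := by
        rw [isingP_sum, isingP_sum, corr_sum, corr_sum, mul_one, one_mul]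
        congr 1
        rw [← Finset.sum_add_distrib]
        exact Finset.sum_congr rfl fun i _ => Finset.sum_add_distrib.symm

end
end

section
/- Second Griffiths inequality (correlation lower bound): for the ferromagnetic Ising model on {1,...,N} with couplings V_{ij} ≥ 0 and field k ≥ 0, ⟨σ_iσ_j⟩ ≥ ⟨σ_i⟩⟨σ_j⟩ for all i, j. -/
open Finset Real

noncomputable section

lemma spin_cases (b : Bool) : spin b = 1 ∨ spin b = -1 := by cases b <;> simp [spin]

lemma monomial_cases {N : ℕ} (s : Fin N → Bool) (m : Fin N → ℕ) :
    (∏ l, spin (s l) ^ m l) = 1 ∨ (∏ l, spin (s l) ^ m l) = -1 := by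
  have h : (∏ l, spin (s l) ^ m l) * (∏ l, spin (s l) ^ m l) = 1 := by
    rw [← Finset.prod_mul_distrib]
    apply Finset.prod_eq_one
    intro l _
    rcases spin_cases (s l) with h | h <;> rw [h] <;>
      simp [← pow_add, neg_one_pow_eq_one_iff_even]
  exact mul_self_eq_one_iff.mp h

lemma griffI {N : ℕ} {ι : Type} [DecidableEq ι] (B : Finset ι) (c : ι → ℝ)
    (m : ι → Fin N → ℕ) (hc : ∀ b ∈ B, 0 ≤ c b) (e : Fin N → ℕ) :
    0 ≤ ∑ s : Fin N → Bool,
      (∏ l, spin (s l) ^ e l) * ∏ b ∈ B, Real.exp (c b * ∏ l, spin (s l) ^ m b l) := by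
  induction B using Finset.cons_induction generalizing e with
  | empty =>
    simp only [Finset.prod_empty, mul_one]
    have h : (∑ s : Fin N → Bool, ∏ l, spin (s l) ^ e l)
        = ∏ l : Fin N, ∑ b : Bool, spin b ^ e l := by
      rw [Finset.prod_univ_sum, Fintype.piFinset_univ]
    rw [h]
    apply Finset.prod_nonneg
    intro l _
    have hb : ∑ b : Bool, spin b ^ e l = 1 + (-1 : ℝ) ^ e l := by
      rw [Fintype.sum_bool]; simp [spin]
    rw [hb]
    rcases Nat.even_or_odd (e l) with h | h
    · rw [h.neg_one_pow]; norm_num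
    · rw [h.neg_one_pow]; norm_num
  | cons b B hb ih =>
    have hcb : 0 ≤ c b := hc b (Finset.mem_cons_self _ _)
    have key : ∀ s : Fin N → Bool, Real.exp (c b * ∏ l, spin (s l) ^ m b l)
        = Real.cosh (c b) + Real.sinh (c b) * ∏ l, spin (s l) ^ m b l := by
      intro s
      rcases monomial_cases s (m b) with h | h <;> rw [h]
      · rw [mul_one, mul_one, Real.cosh_add_sinh]
      · rw [mul_neg_one, mul_neg_one, ← sub_eq_add_neg, Real.cosh_sub_sinh]
    have split : ∀ s : Fin N → Bool,
        (∏ l, spin (s l) ^ e l) * ∏ b' ∈ Finset.cons b B hb, Real.exp (c b' * ∏ l, spin (s l) ^ m b' l)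
        = Real.cosh (c b) * ((∏ l, spin (s l) ^ e l) * ∏ b' ∈ B, Real.exp (c b' * ∏ l, spin (s l) ^ m b' l))
          + Real.sinh (c b) * ((∏ l, spin (s l) ^ (e l + m b l)) * ∏ b' ∈ B, Real.exp (c b' * ∏ l, spin (s l) ^ m b' l)) := by
      intro s
      rw [Finset.prod_cons, key s]
      have : (∏ l, spin (s l) ^ (e l + m b l)) = (∏ l, spin (s l) ^ e l) * ∏ l, spin (s l) ^ m b l := by
        rw [← Finset.prod_mul_distrib]
        exact Finset.prod_congr rfl fun l _ => pow_add _ _ _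
      rw [this]; ring
    simp only [split, Finset.sum_add_distrib, ← Finset.mul_sum]
    have hc' : ∀ b' ∈ B, 0 ≤ c b' := fun b' hb' => hc b' (Finset.mem_cons_of_mem hb')
    have hsinh : 0 ≤ Real.sinh (c b) := by positivity
    have hcosh : 0 ≤ Real.cosh (c b) := (Real.cosh_pos _).le
    exact add_nonneg (mul_nonneg hcosh (ih hc' e)) (mul_nonneg hsinh (ih hc' _))

lemma spin_pow_ind {N : ℕ} (s : Fin N → Bool) (a : Fin N) :
    (∏ l, spin (s l) ^ (if l = a then 1 else 0)) = spin (s a) := by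
  have h : ∀ l : Fin N, spin (s l) ^ (if l = a then 1 else 0)
      = if l = a then spin (s l) else 1 := by
    intro l; split <;> simp
  simp only [h]
  rw [Finset.prod_ite_eq']
  simp

lemma spin_pow_pair {N : ℕ} (s : Fin N → Bool) (a b : Fin N) :
    (∏ l, spin (s l) ^ ((if l = a then 1 else 0) + (if l = b then 1 else 0)))
      = spin (s a) * spin (s b) := by
  simp only [pow_add]
  rw [Finset.prod_mul_distrib, spin_pow_ind, spin_pow_ind]

lemma spin_beq (a b : Bool) : spin (a == b) = spin a * spin b := by
  cases a <;> cases b <;> norm_num [spin]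


/-- Second Griffiths inequality. For the ferromagnetic Ising
model on `{1, …, N}` with couplings `J_{ij} ≥ 0`, field `k ≥ 0` and inverse
temperature `β > 0`, `⟨σ_i σ_j⟩ ≥ ⟨σ_i⟩⟨σ_j⟩` for all `i, j`. -/
theorem second_griffiths_inequality (N : ℕ) (J : Fin N → Fin N → ℝ)
    (hJ : ∀ i j, 0 ≤ J i j) (β k : ℝ) (hβ : 0 < β) (hk : 0 ≤ k) (i j : Fin N) :
    isingMag N J β k i * isingMag N J β k j ≤ isingCorr N J β k i j := by
  classical
  set w : (Fin N → Bool) → ℝ := fun σ => Real.exp (-β * isingH N J k σ) with hw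
  have hZ : 0 < isingZ N J β k :=
    Finset.sum_pos (fun σ _ => Real.exp_pos _) Finset.univ_nonempty
  set Z := isingZ N J β k with hZdef
  set A := ∑ σ : Fin N → Bool, spin (σ i) * w σ with hA
  set Bq := ∑ σ : Fin N → Bool, spin (σ j) * w σ with hB
  set C := ∑ σ : Fin N → Bool, spin (σ i) * spin (σ j) * w σ with hC
  have hZw : Z = ∑ σ : Fin N → Bool, w σ := rfl
  have hmagi : isingMag N J β k i = A / Z := by
    unfold isingMag isingP
    simp only [← mul_div_assoc, ← Finset.sum_div]
    rfl
  have hmagj : isingMag N J β k j = Bq / Z := by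
    unfold isingMag isingP
    simp only [← mul_div_assoc, ← Finset.sum_div]
    rfl
  have hcorr : isingCorr N J β k i j = C / Z := by
    unfold isingCorr isingP
    simp only [← mul_div_assoc, ← Finset.sum_div]
    rfl
  -- the key inequality
  have key : A * Bq ≤ C * Z := by
    set D := ∑ σ : Fin N → Bool, ∑ τ : Fin N → Bool,
      (spin (σ i) - spin (τ i)) * (spin (σ j) - spin (τ j)) * (w σ * w τ) with hDdef
    have hD : D = 2 * (C * Z) - 2 * (A * Bq) := by
      have e1 : C * Z = ∑ σ : Fin N → Bool, ∑ τ : Fin N → Bool,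
          (spin (σ i) * spin (σ j) * w σ) * w τ := by
        rw [hC, hZw]; exact Finset.sum_mul_sum _ _ _ _
      have e2 : A * Bq = ∑ σ : Fin N → Bool, ∑ τ : Fin N → Bool,
          (spin (σ i) * w σ) * (spin (τ j) * w τ) := by
        rw [hA, hB]; exact Finset.sum_mul_sum _ _ _ _
      have e3 : Bq * A = ∑ σ : Fin N → Bool, ∑ τ : Fin N → Bool,
          (spin (σ j) * w σ) * (spin (τ i) * w τ) := by
        rw [hA, hB]; exact Finset.sum_mul_sum _ _ _ _
      have e4 : Z * C = ∑ σ : Fin N → Bool, ∑ τ : Fin N → Bool,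
          w σ * (spin (τ i) * spin (τ j) * w τ) := by
        rw [hC, hZw]; exact Finset.sum_mul_sum _ _ _ _
      have expand : ∀ σ τ : Fin N → Bool,
          (spin (σ i) - spin (τ i)) * (spin (σ j) - spin (τ j)) * (w σ * w τ)
          = (spin (σ i) * spin (σ j) * w σ) * w τ - (spin (σ i) * w σ) * (spin (τ j) * w τ)
            - (spin (σ j) * w σ) * (spin (τ i) * w τ)
            + w σ * (spin (τ i) * spin (τ j) * w τ) := by
        intro σ τ; ring
      rw [hDdef]
      simp only [expand, Finset.sum_sub_distrib, Finset.sum_add_distrib]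
      rw [← e1, ← e2, ← e3, ← e4]
      ring
    have hDpos : 0 ≤ D := by
      -- change of variables τ = (s == t) pointwise
      have hCoV : D = ∑ t : Fin N → Bool, ∑ s : Fin N → Bool,
          (spin (s i) - spin (s i == t i)) * (spin (s j) - spin (s j == t j)) *
            (w s * w (fun l => s l == t l)) := by
        have step : ∀ s : Fin N → Bool,
            (∑ τ : Fin N → Bool,
              (spin (s i) - spin (τ i)) * (spin (s j) - spin (τ j)) * (w s * w τ))
            = ∑ t : Fin N → Bool,
              (spin (s i) - spin (s i == t i)) * (spin (s j) - spin (s j == t j)) *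
                (w s * w (fun l => s l == t l)) := by
          intro s
          refine (Fintype.sum_bijective (fun t : Fin N → Bool => fun l => s l == t l)
            (Function.Involutive.bijective ?_)
            (fun tt => (spin (s i) - spin (s i == tt i)) * (spin (s j) - spin (s j == tt j)) *
              (w s * w (fun l => s l == tt l)))
            (fun τ => (spin (s i) - spin (τ i)) * (spin (s j) - spin (τ j)) * (w s * w τ))
            (fun tt => rfl)).symm
          intro t0; funext l
          show (s l == (s l == t0 l)) = t0 l
          cases s l <;> cases t0 l <;> rfl
        rw [hDdef]
        rw [Finset.sum_congr rfl fun s _ => step s]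
        exact Finset.sum_comm
      rw [hCoV]
      apply Finset.sum_nonneg
      intro t _
      -- Griffiths I setup for fixed t
      set c : (Fin N × Fin N) ⊕ (Fin N) → ℝ := Sum.elim
        (fun p => β * (J p.1 p.2 * (1 + spin (t p.1) * spin (t p.2))))
        (fun a => β * (k * (1 + spin (t a)))) with hc
      set m : (Fin N × Fin N) ⊕ (Fin N) → Fin N → ℕ := Sum.elim
        (fun p l => (if l = p.1 then 1 else 0) + (if l = p.2 then 1 else 0))
        (fun a l => if l = a then 1 else 0) with hm
      set e : Fin N → ℕ := fun l => (if l = i then 1 else 0) + (if l = j then 1 else 0) with he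
      have hτspin : ∀ (s : Fin N → Bool) (l : Fin N),
          spin ((fun l => s l == t l) l) = spin (s l) * spin (t l) :=
        fun s l => spin_beq _ _
      have hwprod : ∀ s : Fin N → Bool, w s * w (fun l => s l == t l)
          = ∏ b ∈ (pairs N).disjSum Finset.univ,
              Real.exp (c b * ∏ l, spin (s l) ^ m b l) := by
        intro s
        rw [← Real.exp_sum, hw]
        simp only []
        rw [← Real.exp_add]
        congr 1
        rw [Finset.sum_disjSum]
        simp only [hc, hm, Sum.elim_inl, Sum.elim_inr, spin_pow_pair, spin_pow_ind]
        unfold isingH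
        simp only [hτspin]
        have h1 : ∑ p ∈ pairs N,
            β * (J p.1 p.2 * (1 + spin (t p.1) * spin (t p.2))) * (spin (s p.1) * spin (s p.2))
            = (∑ p ∈ pairs N, β * (J p.1 p.2 * spin (s p.1) * spin (s p.2)))
              + ∑ p ∈ pairs N, β * (J p.1 p.2 * (spin (s p.1) * spin (t p.1)) * (spin (s p.2) * spin (t p.2))) := by
          rw [← Finset.sum_add_distrib]
          exact Finset.sum_congr rfl fun p _ => by ring
        have h2 : ∑ a : Fin N, β * (k * (1 + spin (t a))) * spin (s a)
            = (∑ a : Fin N, β * (k * spin (s a)))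
              + ∑ a : Fin N, β * (k * (spin (s a) * spin (t a))) := by
          rw [← Finset.sum_add_distrib]
          exact Finset.sum_congr rfl fun a _ => by ring
        rw [h1, h2, ← Finset.mul_sum, ← Finset.mul_sum, ← Finset.mul_sum, ← Finset.mul_sum,
          ← Finset.mul_sum, ← Finset.mul_sum]
        ring
      have hper : ∀ s : Fin N → Bool,
          (spin (s i) - spin (s i == t i)) * (spin (s j) - spin (s j == t j)) *
            (w s * w (fun l => s l == t l))
          = ((1 - spin (t i)) * (1 - spin (t j))) *
            ((∏ l, spin (s l) ^ e l) * ∏ b ∈ (pairs N).disjSum Finset.univ,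
              Real.exp (c b * ∏ l, spin (s l) ^ m b l)) := by
        intro s
        rw [← hwprod s, spin_beq, spin_beq, he, spin_pow_pair]
        ring
      simp only [hper, ← Finset.mul_sum]
      have hfac : 0 ≤ (1 - spin (t i)) * (1 - spin (t j)) := by
        have h1 := spin_cases (t i)
        have h2 := spin_cases (t j)
        rcases h1 with h1 | h1 <;> rcases h2 with h2 | h2 <;> rw [h1, h2] <;> norm_num
      refine mul_nonneg hfac (griffI _ c m ?_ e)
      rintro (p | a) _
      · simp only [hc, Sum.elim_inl]
        have h1 := spin_cases (t p.1)
        have h2 := spin_cases (t p.2)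
        have hJ' := hJ p.1 p.2
        rcases h1 with h1 | h1 <;> rcases h2 with h2 | h2 <;> rw [h1, h2] <;> positivity
      · simp only [hc, Sum.elim_inr]
        rcases spin_cases (t a) with h1 | h1 <;> rw [h1] <;> positivity
    linarith [hD, hDpos]
  rw [hmagi, hmagj, hcorr, div_mul_div_comm, div_le_div_iff₀ (by positivity) hZ]
  nlinarith [key, hZ, sq_nonneg Z]


end
end
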